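/- Let G be an irreducible graph-directed matrix product system with irreducibility family H. Then there exist constants A, B > 0 such that for any finite path η ∈ Σ*, there exists some φ ∈ H such that ηφ is a cycle (a path beginning and ending at the same vertex) and A·‖T(η)‖ ≤ spr T(ηφ) ≤ B·‖T(η)‖. -/

import Mathlib

open Filter Topology
open scoped ENNReal NNReal


section PF

variable {n : Type*} [Fintype n] [DecidableEq n]


lemma eigen_mem_spectrum {M : Matrix n n ℝ} {r : ℝ} {x : n → ℝ} (hx : x ≠ 0)
    (h : M.mulVec x = r • x) : r ∈ spectrum ℝ M := by
  rw [spectrum.mem_iff]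
  intro hu
  rw [Matrix.isUnit_iff_isUnit_det, isUnit_iff_ne_zero] at hu
  apply hu
  rw [Matrix.exists_mulVec_eq_zero_iff.symm]
  refine ⟨x, hx, ?_⟩
  have : (algebraMap ℝ (Matrix n n ℝ) r) = r • (1 : Matrix n n ℝ) := by
    rw [Algebra.algebraMap_eq_smul_one]
  rw [this, Matrix.sub_mulVec, Matrix.smul_mulVec, Matrix.one_mulVec, h, sub_self]

lemma spectrum_eigen {M : Matrix n n ℝ} {r : ℝ} (h : r ∈ spectrum ℝ M) :
    ∃ x : n → ℝ, x ≠ 0 ∧ M.mulVec x = r • x := by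
  rw [spectrum.mem_iff] at h
  rw [Matrix.isUnit_iff_isUnit_det, isUnit_iff_ne_zero, not_not,
    ← Matrix.exists_mulVec_eq_zero_iff] at h
  obtain ⟨x, hx, hx0⟩ := h
  refine ⟨x, hx, ?_⟩
  have : (algebraMap ℝ (Matrix n n ℝ) r) = r • (1 : Matrix n n ℝ) := by
    rw [Algebra.algebraMap_eq_smul_one]
  rw [this, Matrix.sub_mulVec, Matrix.smul_mulVec, Matrix.one_mulVec] at hx0
  exact (sub_eq_zero.mp hx0).symm

lemma pf_pos [Nonempty n] (M : Matrix n n ℝ) (hM : ∀ i j, 0 < M i j) (q : n) :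
    ∃ (r : ℝ) (x : n → ℝ), M q q ≤ r ∧ (∀ i, 0 ≤ x i) ∧ (∑ i, x i = 1) ∧
      (∀ i, r * x i = ∑ j, M i j * x j) := by
  classical
  set S : ℝ := ∑ i, ∑ j, M i j with hS
  set K : Set ((n → ℝ) × ℝ) :=
    {p | (∀ i, 0 ≤ p.1 i) ∧ ((∑ i, p.1 i = 1) ∧ (0 ≤ p.2 ∧
      ∀ i, p.2 * p.1 i ≤ ∑ j, M i j * p.1 j))} with hK
  -- entries of members are ≤ 1
  have hle1 : ∀ p ∈ K, ∀ i, p.1 i ≤ 1 := by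
    intro p hp i
    calc p.1 i ≤ ∑ j, p.1 j := Finset.single_le_sum (fun j _ => hp.1 j) (Finset.mem_univ i)
    _ = 1 := hp.2.1
  have hle2 : ∀ p ∈ K, p.2 ≤ S := by
    intro p hp
    have h1 : p.2 = ∑ i, p.2 * p.1 i := by
      rw [← Finset.mul_sum, hp.2.1, mul_one]
    rw [h1]
    refine le_trans (Finset.sum_le_sum fun i _ => hp.2.2.2 i) ?_
    refine Finset.sum_le_sum fun i _ => Finset.sum_le_sum fun j _ => ?_
    calc M i j * p.1 j ≤ M i j * 1 :=
          mul_le_mul_of_nonneg_left (hle1 p hp j) (hM i j).le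
      _ = M i j := mul_one _
  -- K is compact
  have hKc : IsCompact K := by
    have hbox : IsCompact ((Set.univ.pi fun _ : n => Set.Icc (0:ℝ) 1) ×ˢ Set.Icc 0 S) :=
      (isCompact_univ_pi fun _ => isCompact_Icc).prod isCompact_Icc
    refine hbox.of_isClosed_subset ?_ ?_
    · rw [hK, Set.setOf_and, Set.setOf_and, Set.setOf_and]
      refine IsClosed.inter ?_ (IsClosed.inter ?_ (IsClosed.inter ?_ ?_))
      · rw [show {p : (n → ℝ) × ℝ | ∀ i, 0 ≤ p.1 i} = ⋂ i, {p | 0 ≤ p.1 i} by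
          ext p; simp]
        exact isClosed_iInter fun i =>
          isClosed_le continuous_const ((continuous_apply i).comp continuous_fst)
      · exact isClosed_eq (continuous_finset_sum _ fun j _ =>
          (continuous_apply j).comp continuous_fst) continuous_const
      · exact isClosed_le continuous_const continuous_snd
      · rw [show {p : (n → ℝ) × ℝ | ∀ i, p.2 * p.1 i ≤ ∑ j, M i j * p.1 j}
            = ⋂ i, {p | p.2 * p.1 i ≤ ∑ j, M i j * p.1 j} by ext p; simp]
        exact isClosed_iInter fun i => isClosed_le
          (continuous_snd.mul ((continuous_apply i).comp continuous_fst))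
          (continuous_finset_sum _ fun j _ =>
            continuous_const.mul ((continuous_apply j).comp continuous_fst))
    · intro p hp
      exact ⟨fun i _ => ⟨hp.1 i, hle1 p hp i⟩, hp.2.2.1, hle2 p hp⟩
  -- K is nonempty
  have hp₀ : ((fun i => if i = q then (1:ℝ) else 0, M q q)) ∈ K := by
    refine ⟨fun i => by positivity, by simp, (hM q q).le, fun i => ?_⟩
    simp only [mul_ite, mul_one, mul_zero]
    rw [Finset.sum_ite_eq' Finset.univ q (fun j => M i j)]
    simp only [Finset.mem_univ, if_true]
    by_cases h : i = q
    · subst h; simp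
    · simp [h, (hM i q).le]
  -- maximize p.2 on K
  obtain ⟨p, hpK, hmax⟩ := hKc.exists_isMaxOn ⟨_, hp₀⟩ continuous_snd.continuousOn
  set x : n → ℝ := p.1 with hx
  set r : ℝ := p.2 with hr
  have hrq : M q q ≤ r := hmax hp₀
  have hxnn : ∀ i, 0 ≤ x i := hpK.1
  have hxsum : ∑ i, x i = 1 := hpK.2.1
  have hrnn : 0 ≤ r := hpK.2.2.1
  have hcon : ∀ i, r * x i ≤ ∑ j, M i j * x j := hpK.2.2.2
  refine ⟨r, x, hrq, hxnn, hxsum, ?_⟩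
  by_contra hne
  push_neg at hne
  obtain ⟨k, hk⟩ := hne
  have hkstrict : r * x k < ∑ j, M k j * x j := lt_of_le_of_ne (hcon k) hk
  set g : ℝ := (∑ j, M k j * x j) - r * x k with hg
  have hgpos : 0 < g := by simp [hg]; linarith
  set t : ℝ := g / (2 * (r + 1)) with ht
  have htpos : 0 < t := by positivity
  set m : ℝ := Finset.univ.inf' Finset.univ_nonempty (fun i => M i k) with hm
  have hmpos : 0 < m := by
    rw [hm, Finset.lt_inf'_iff]
    exact fun i _ => hM i k
  have hmle : ∀ i, m ≤ M i k := fun i => Finset.inf'_le _ (Finset.mem_univ i)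
  set δ : ℝ := min (t * m) (g / (2 * (x k + t + 1))) with hδ
  have hδpos : 0 < δ := by
    have h2 : (0:ℝ) < x k + t + 1 := by linarith [hxnn k]
    exact lt_min (by positivity) (div_pos hgpos (by linarith))
  have hδ1 : δ ≤ t * m := min_le_left _ _
  have hδ2 : δ * (x k + t + 1) ≤ g / 2 := by
    have h1 : δ ≤ g / (2 * (x k + t + 1)) := min_le_right _ _
    have h2 : (0:ℝ) < x k + t + 1 := by
      have := hxnn k; linarith
    calc δ * (x k + t + 1) ≤ (g / (2 * (x k + t + 1))) * (x k + t + 1) :=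
          mul_le_mul_of_nonneg_right h1 h2.le
      _ = g / 2 := by field_simp
  -- improved point
  set x' : n → ℝ := fun i => x i + (if i = k then t else 0) with hx'
  have hx'sum : ∑ i, x' i = 1 + t := by
    rw [hx']
    rw [Finset.sum_add_distrib, hxsum, Finset.sum_ite_eq' Finset.univ k (fun _ => t)]
    simp
  have h1t : (0:ℝ) < 1 + t := by linarith
  have hmain : ∀ i, (r + δ) * x' i ≤ ∑ j, M i j * x' j := by
    intro i
    have hrhs : ∑ j, M i j * x' j = (∑ j, M i j * x j) + t * M i k := by
      rw [hx']
      simp only [mul_add, mul_ite, mul_zero]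
      rw [Finset.sum_add_distrib, Finset.sum_ite_eq' Finset.univ k (fun j => M i j * t)]
      simp [mul_comm]
    rw [hrhs]
    by_cases h : i = k
    · subst h
      have hrt : r * t ≤ g / 2 := by
        have : r * t ≤ (r + 1) * t := by nlinarith
        rw [ht] at this ⊢
        calc r * (g / (2 * (r + 1))) ≤ (r + 1) * (g / (2 * (r + 1))) := this
          _ = g / 2 := by field_simp
      have hδb : δ * (x i + t) ≤ g / 2 := by nlinarith [hδpos]
      have hMkk : 0 ≤ t * M i i := mul_nonneg htpos.le (hM i i).le
      have hrx : r * x i = (∑ j, M i j * x j) - g := by rw [hg]; ring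
      have hx'k : x' i = x i + t := by simp [hx']
      rw [hx'k]
      nlinarith
    · have hx'i : x' i = x i := by simp [hx', h]
      rw [hx'i]
      have h1 : δ * x i ≤ t * m := by
        calc δ * x i ≤ δ * 1 := mul_le_mul_of_nonneg_left (hle1 p hpK i) hδpos.le
          _ = δ := mul_one _
          _ ≤ t * m := hδ1
      have h2 : t * m ≤ t * M i k := mul_le_mul_of_nonneg_left (hmle i) htpos.le
      have := hcon i
      nlinarith
  have hp' : ((fun i => (1 + t)⁻¹ * x' i, r + δ)) ∈ K := by
    have hx'nn : ∀ i, 0 ≤ x' i := by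
      intro i; rw [hx']; dsimp only
      by_cases h : i = k
      · rw [if_pos h]; linarith [hxnn i]
      · rw [if_neg h, add_zero]; exact hxnn i
    refine ⟨fun i => ?_, ?_, by linarith, fun i => ?_⟩
    · exact mul_nonneg (by positivity) (hx'nn i)
    · rw [← Finset.mul_sum, hx'sum, inv_mul_cancel₀ h1t.ne']
    · simp only
      rw [show ∑ j, M i j * ((1 + t)⁻¹ * x' j) = (1 + t)⁻¹ * ∑ j, M i j * x' j by
        rw [Finset.mul_sum]; congr 1; ext j; ring]
      rw [show (r + δ) * ((1 + t)⁻¹ * x' i) = (1 + t)⁻¹ * ((r + δ) * x' i) by ring]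
      exact mul_le_mul_of_nonneg_left (hmain i) (by positivity)
  have := hmax hp'
  simp only at this
  change r + δ ≤ r at this
  linarith

lemma pf_exists (M : Matrix n n ℝ) (hM : ∀ i j, 0 ≤ M i j) (q : n) :
    ∃ (r : ℝ) (x : n → ℝ), M q q ≤ r ∧ x ≠ 0 ∧ M.mulVec x = r • x := by
  classical
  have : Nonempty n := ⟨q⟩
  set C : ℝ := ∑ i, ∑ j, (M i j + 1) with hC
  set Mk : ℕ → Matrix n n ℝ := fun k => Matrix.of fun i j => M i j + ((k:ℝ) + 1)⁻¹ with hMk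
  have hkpos : ∀ k : ℕ, (0:ℝ) < ((k:ℝ) + 1)⁻¹ := fun k => by positivity
  have hkle : ∀ k : ℕ, ((k:ℝ) + 1)⁻¹ ≤ 1 := fun k => by
    rw [inv_le_one_iff₀]; right; push_cast; linarith [Nat.cast_nonneg (α := ℝ) k]
  have hpos : ∀ k i j, 0 < Mk k i j := fun k i j => by
    have := hM i j; have := hkpos k; simp only [hMk, Matrix.of_apply]; linarith
  have h := fun k => pf_pos (Mk k) (hpos k) q
  choose r x h1 h2 h3 h4 using h
  have hxle1 : ∀ k i, x k i ≤ 1 := by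
    intro k i
    calc x k i ≤ ∑ j, x k j := Finset.single_le_sum (fun j _ => h2 k j) (Finset.mem_univ i)
    _ = 1 := h3 k
  have hrlow : ∀ k, M q q ≤ r k := by
    intro k
    refine le_trans ?_ (h1 k)
    simp only [hMk, Matrix.of_apply]
    linarith [hkpos k]
  have hrhigh : ∀ k, r k ≤ C := by
    intro k
    have e1 : r k = ∑ i, r k * x k i := by rw [← Finset.mul_sum, h3 k, mul_one]
    rw [e1, hC]
    refine Finset.sum_le_sum fun i _ => ?_
    rw [h4 k i]
    refine Finset.sum_le_sum fun j _ => ?_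
    have : Mk k i j ≤ M i j + 1 := by
      simp only [hMk, Matrix.of_apply]; linarith [hkle k]
    calc Mk k i j * x k j ≤ Mk k i j * 1 :=
        mul_le_mul_of_nonneg_left (hxle1 k j) (hpos k i j).le
      _ = Mk k i j := mul_one _
      _ ≤ M i j + 1 := by simp only [hMk, Matrix.of_apply]; linarith [hkle k]
  -- compactness
  have hbox : IsCompact ((Set.univ.pi fun _ : n => Set.Icc (0:ℝ) 1) ×ˢ Set.Icc (M q q) C) :=
    (isCompact_univ_pi fun _ => isCompact_Icc).prod isCompact_Icc
  have hmem : ∀ k, ((x k, r k) : (n → ℝ) × ℝ) ∈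
      ((Set.univ.pi fun _ : n => Set.Icc (0:ℝ) 1) ×ˢ Set.Icc (M q q) C) := by
    intro k
    exact ⟨fun i _ => ⟨h2 k i, hxle1 k i⟩, hrlow k, hrhigh k⟩
  obtain ⟨a, _, φ, hφ, hat⟩ := hbox.tendsto_subseq hmem
  have hxt : Tendsto (fun j => x (φ j)) atTop (𝓝 a.1) :=
    (continuous_fst.tendsto a).comp hat
  have hrt : Tendsto (fun j => r (φ j)) atTop (𝓝 a.2) :=
    (continuous_snd.tendsto a).comp hat
  have hxti : ∀ i, Tendsto (fun j => x (φ j) i) atTop (𝓝 (a.1 i)) :=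
    fun i => (continuous_apply i).continuousAt.tendsto.comp hxt
  have hεt : Tendsto (fun j : ℕ => ((φ j : ℝ) + 1)⁻¹) atTop (𝓝 0) := by
    refine tendsto_inv_atTop_zero.comp ?_
    refine tendsto_atTop_add_const_right _ 1 ?_
    exact tendsto_natCast_atTop_atTop.comp hφ.tendsto_atTop
  -- sum of limit is 1
  have hsum1 : ∑ i, a.1 i = 1 := by
    have l1 : Tendsto (fun j => ∑ i, x (φ j) i) atTop (𝓝 (∑ i, a.1 i)) :=
      tendsto_finset_sum _ fun i _ => hxti i
    have l2 : Tendsto (fun j => ∑ i, x (φ j) i) atTop (𝓝 1) := by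
      simp only [h3]; exact tendsto_const_nhds
    exact tendsto_nhds_unique l1 l2
  refine ⟨a.2, a.1, ?_, ?_, ?_⟩
  · -- M q q ≤ a.2
    have l2 : Tendsto (fun j => r (φ j)) atTop (𝓝 a.2) := hrt
    have : ∀ j, M q q ≤ r (φ j) := fun j => hrlow (φ j)
    exact le_of_tendsto_of_tendsto tendsto_const_nhds l2 (Eventually.of_forall this)
  · intro h0
    rw [h0] at hsum1
    simp at hsum1
  · funext i
    have l1 : Tendsto (fun j => r (φ j) * x (φ j) i) atTop (𝓝 (a.2 * a.1 i)) :=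
      hrt.mul (hxti i)
    have key : ∀ j, r (φ j) * x (φ j) i
        = (∑ l, M i l * x (φ j) l) + ((φ j : ℝ) + 1)⁻¹ := by
      intro j
      rw [h4 (φ j) i]
      have : ∀ l, Mk (φ j) i l * x (φ j) l
          = M i l * x (φ j) l + ((φ j : ℝ) + 1)⁻¹ * x (φ j) l := by
        intro l; simp only [hMk, Matrix.of_apply]; ring
      rw [Finset.sum_congr rfl fun l _ => this l, Finset.sum_add_distrib,
        ← Finset.mul_sum, h3 (φ j), mul_one]
    have l2 : Tendsto (fun j => r (φ j) * x (φ j) i) atTop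
        (𝓝 ((∑ l, M i l * a.1 l) + 0)) := by
      rw [show (fun j => r (φ j) * x (φ j) i)
          = fun j => (∑ l, M i l * x (φ j) l) + ((φ j : ℝ) + 1)⁻¹ from funext key]
      exact (tendsto_finset_sum _ fun l _ =>
        (tendsto_const_nhds.mul (hxti l))).add hεt
    have := tendsto_nhds_unique l1 l2
    simp only [Matrix.mulVec, dotProduct, Pi.smul_apply, smul_eq_mul]
    rw [this, add_zero]

lemma eigen_abs_le (M : Matrix n n ℝ) (hM : ∀ i j, 0 ≤ M i j) {k : ℝ}
    (hk : k ∈ spectrum ℝ M) : |k| ≤ ∑ i, ∑ j, M i j := by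
  classical
  obtain ⟨x, hx0, hxe⟩ := spectrum_eigen hk
  cases isEmpty_or_nonempty n with
  | inl h => exact absurd (Subsingleton.elim x 0) hx0
  | inr h =>
  obtain ⟨i, _, hi⟩ := Finset.exists_max_image Finset.univ (fun i => |x i|)
    Finset.univ_nonempty
  have hxi : 0 < |x i| := by
    rcases lt_or_eq_of_le (abs_nonneg (x i)) with h' | h'
    · exact h'
    · exfalso
      apply hx0
      funext j
      have := hi j (Finset.mem_univ j)
      rw [← h'] at this
      simpa using abs_nonpos_iff.mp (le_trans this (le_of_eq rfl))
  have hrow : ∑ j, M i j ≤ ∑ i', ∑ j, M i' j :=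
    Finset.single_le_sum (f := fun i' => ∑ j, M i' j)
      (fun i' _ => Finset.sum_nonneg fun j _ => hM i' j) (Finset.mem_univ i)
  have key : |k| * |x i| ≤ (∑ i', ∑ j, M i' j) * |x i| := by
    have e1 : k * x i = ∑ j, M i j * x j := by
      have := congrFun hxe i
      simp only [Matrix.mulVec, dotProduct, Pi.smul_apply, smul_eq_mul] at this
      rw [this]
    calc |k| * |x i| = |k * x i| := (abs_mul k (x i)).symm
      _ = |∑ j, M i j * x j| := by rw [e1]
      _ ≤ ∑ j, |M i j * x j| := Finset.abs_sum_le_sum_abs _ _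
      _ = ∑ j, M i j * |x j| := by
          refine Finset.sum_congr rfl fun j _ => ?_
          rw [abs_mul, abs_of_nonneg (hM i j)]
      _ ≤ ∑ j, M i j * |x i| := Finset.sum_le_sum fun j _ =>
          mul_le_mul_of_nonneg_left (hi j (Finset.mem_univ j)) (hM i j)
      _ = (∑ j, M i j) * |x i| := by rw [Finset.sum_mul]
      _ ≤ (∑ i', ∑ j, M i' j) * |x i| := mul_le_mul_of_nonneg_right hrow (abs_nonneg _)
  exact le_of_mul_le_mul_right key hxi

lemma spr_upper' (M : Matrix n n ℝ) (hM : ∀ i j, 0 ≤ M i j) :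
    spectralRadius ℝ M ≤ ENNReal.ofReal (∑ i, ∑ j, M i j) := by
  rw [spectralRadius]
  refine iSup₂_le fun k hk => ?_
  rw [← ENNReal.ofReal_coe_nnreal, coe_nnnorm]
  exact ENNReal.ofReal_le_ofReal (eigen_abs_le M hM hk)

lemma spr_upper (M : Matrix n n ℝ) (hM : ∀ i j, 0 ≤ M i j) :
    (spectralRadius ℝ M).toReal ≤ ∑ i, ∑ j, M i j := by
  have h0 : 0 ≤ ∑ i, ∑ j, M i j :=
    Finset.sum_nonneg fun i _ => Finset.sum_nonneg fun j _ => hM i j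
  exact ENNReal.toReal_le_of_le_ofReal h0 (spr_upper' M hM)

lemma spr_lower (M : Matrix n n ℝ) (hM : ∀ i j, 0 ≤ M i j) (q : n) :
    M q q ≤ (spectralRadius ℝ M).toReal := by
  obtain ⟨r, x, hr, hx0, hxe⟩ := pf_exists M hM q
  have hrs : r ∈ spectrum ℝ M := eigen_mem_spectrum hx0 hxe
  have hrnn : 0 ≤ r := le_trans (hM q q) hr
  have h1 : (‖r‖₊ : ℝ≥0∞) ≤ spectralRadius ℝ M := by
    rw [spectralRadius]
    exact @le_iSup₂ ℝ≥0∞ ℝ (fun k => k ∈ spectrum ℝ M) _ (fun k _ => (‖k‖₊ : ℝ≥0∞)) r hrs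
  have hne : spectralRadius ℝ M ≠ ⊤ :=
    ne_top_of_le_ne_top ENNReal.ofReal_ne_top (spr_upper' M hM)
  have h2 : ((‖r‖₊ : ℝ≥0∞)).toReal ≤ (spectralRadius ℝ M).toReal :=
    ENNReal.toReal_mono hne h1
  calc M q q ≤ r := hr
    _ = ‖r‖ := (Real.norm_of_nonneg hrnn).symm
    _ = ((‖r‖₊ : ℝ≥0∞)).toReal := by simp
    _ ≤ _ := h2

end PF

/-- A graph-directed matrix product system: a finite directed graph (multiple
edges allowed) with a dimension for each vertex, a non-negative transition
matrix for each edge (encoded as a block of a big matrix indexed by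
`(v : V) × Fin (dim v)`, supported on the `(src e, tgt e)` block), and a
weight `W e ∈ (0,1)` for each edge. -/
structure GMPS where
  V : Type
  E : Type
  [fintV : Fintype V]
  [decV : DecidableEq V]
  [fintE : Fintype E]
  [decE : DecidableEq E]
  src : E → V
  tgt : E → V
  dim : V → ℕ
  dim_pos : ∀ v, 0 < dim v
  T : E → Matrix ((v : V) × Fin (dim v)) ((v : V) × Fin (dim v)) ℝ
  T_nonneg : ∀ e i j, 0 ≤ T e i j
  T_block : ∀ e i j, T e i j ≠ 0 → i.1 = src e ∧ j.1 = tgt e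
  W : E → ℝ
  W_pos : ∀ e, 0 < W e
  W_lt_one : ∀ e, W e < 1

attribute [instance] GMPS.fintV GMPS.decV GMPS.fintE GMPS.decE

namespace GMPS

variable (G : GMPS)

/-- The global index type for the block matrices. -/
abbrev Idx := (v : G.V) × Fin (G.dim v)

/-- A finite sequence of edges is a path when consecutive edges are compatible. -/
def IsPath (l : List G.E) : Prop := l.Chain' fun e e' => G.tgt e = G.src e'

/-- A (nonempty) path starts at the source of its first edge. -/
def startsAt (l : List G.E) (v : G.V) : Prop := ∃ e, l.head? = some e ∧ G.src e = v

/-- A (nonempty) path ends at the target of its last edge. -/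
def endsAt (l : List G.E) (v : G.V) : Prop := ∃ e, l.getLast? = some e ∧ G.tgt e = v

/-- `l` is a (nonempty) path from `v₁` to `v₂`. -/
def PathFrom (l : List G.E) (v₁ v₂ : G.V) : Prop :=
  G.IsPath l ∧ G.startsAt l v₁ ∧ G.endsAt l v₂

/-- The underlying graph is strongly connected. -/
def StronglyConnected : Prop := ∀ v₁ v₂ : G.V, ∃ l, G.PathFrom l v₁ v₂

/-- The product `T(e₁) ⋯ T(eₙ)` of the transition matrices along a path. -/
noncomputable def Tp (l : List G.E) : Matrix G.Idx G.Idx ℝ := (l.map G.T).prod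

/-- The product `W(e₁) ⋯ W(eₙ)` of the weights along a path. -/
def Wp (l : List G.E) : ℝ := (l.map G.W).prod

/-- The norm of a matrix: the sum of its entries. -/
noncomputable def mnorm (M : Matrix G.Idx G.Idx ℝ) : ℝ := ∑ i, ∑ j, M i j

/-- `Σ_t`: the paths `η` with `W(η) < t ≤ W(η⁻)` and `‖T(η)‖ > 0`. -/
def SigmaT (t : ℝ) : Set (List G.E) :=
  {l | G.IsPath l ∧ l ≠ [] ∧ G.Wp l < t ∧ t ≤ G.Wp l.dropLast ∧ 0 < G.mnorm (G.Tp l)}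

/-- `H` is an irreducibility family: for all vertices `v₁, v₂` and all indices
`i ≤ d(v₁)`, `j ≤ d(v₂)` there is `γ ∈ H` from `v₁` to `v₂` with `T(γ)_{i,j} > 0`. -/
def IrredFamily (H : Finset (List G.E)) : Prop :=
  ∀ (v₁ v₂ : G.V) (i : Fin (G.dim v₁)) (j : Fin (G.dim v₂)),
    ∃ γ ∈ H, G.PathFrom γ v₁ v₂ ∧ 0 < G.Tp γ ⟨v₁, i⟩ ⟨v₂, j⟩

/-- The matrix product system is irreducible. -/
def Irreducible : Prop := ∃ H : Finset (List G.E), G.IrredFamily H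

/-- An infinite path in the graph. -/
def IsInfPath (γ : ℕ → G.E) : Prop := ∀ n, G.tgt (γ n) = G.src (γ (n + 1))

/-- The prefix `γ|n` of an infinite path. -/
def pfx (γ : ℕ → G.E) (n : ℕ) : List G.E := (List.range n).map γ

/-- The quotient `log ‖T(γ|n)‖ / log W(γ|n)` whose `liminf`/`limsup`/limit are
the lower/upper Lyapunov exponent and Lyapunov exponent of `γ`. -/
noncomputable def lyapQ (γ : ℕ → G.E) (n : ℕ) : ℝ :=
  Real.log (G.mnorm (G.Tp (G.pfx γ n))) / Real.log (G.Wp (G.pfx γ n))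

/-- `min_{η ∈ Σ_t} log ‖T(η)‖ / log t`. -/
noncomputable def minQ (t : ℝ) : ℝ :=
  sInf ((fun l => Real.log (G.mnorm (G.Tp l)) / Real.log t) '' G.SigmaT t)

/-- `max_{η ∈ Σ_t} log ‖T(η)‖ / log t`. -/
noncomputable def maxQ (t : ℝ) : ℝ :=
  sSup ((fun l => Real.log (G.mnorm (G.Tp l)) / Real.log t) '' G.SigmaT t)

/-- The spectral radius of a (non-negative) square matrix. -/
noncomputable def spr (M : Matrix G.Idx G.Idx ℝ) : ℝ := (spectralRadius ℝ M).toReal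

end GMPS


namespace GMPS

variable (G : GMPS)

lemma Tp_nil : G.Tp ([] : List G.E) = 1 := by simp [Tp]

lemma Tp_cons (e : G.E) (l : List G.E) : G.Tp (e :: l) = G.T e * G.Tp l := by
  simp [Tp]

lemma Tp_append (l₁ l₂ : List G.E) : G.Tp (l₁ ++ l₂) = G.Tp l₁ * G.Tp l₂ := by
  simp [Tp]

lemma Tp_nonneg (l : List G.E) : ∀ i j, 0 ≤ G.Tp l i j := by
  induction l with
  | nil =>
    intro i j
    rw [Tp_nil, Matrix.one_apply]
    split <;> norm_num
  | cons e l ih =>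
    intro i j
    rw [Tp_cons, Matrix.mul_apply]
    exact Finset.sum_nonneg fun k _ => mul_nonneg (G.T_nonneg e i k) (ih k j)

lemma mnorm_nonneg {M : Matrix G.Idx G.Idx ℝ} (hM : ∀ i j, 0 ≤ M i j) :
    0 ≤ G.mnorm M :=
  Finset.sum_nonneg fun i _ => Finset.sum_nonneg fun j _ => hM i j

lemma mnorm_mul_le (A B : Matrix G.Idx G.Idx ℝ) (hA : ∀ i j, 0 ≤ A i j)
    (hB : ∀ i j, 0 ≤ B i j) : G.mnorm (A * B) ≤ G.mnorm A * G.mnorm B := by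
  have hrow : ∀ k, ∑ j, B k j ≤ ∑ k', ∑ j, B k' j := fun k =>
    Finset.single_le_sum (f := fun k' => ∑ j, B k' j)
      (fun k' _ => Finset.sum_nonneg fun j _ => hB k' j) (Finset.mem_univ k)
  calc G.mnorm (A * B) = ∑ i, ∑ j, ∑ k, A i k * B k j := by
        simp [mnorm, Matrix.mul_apply]
    _ = ∑ i, ∑ k, A i k * ∑ j, B k j := by
        refine Finset.sum_congr rfl fun i _ => ?_
        rw [Finset.sum_comm]
        exact Finset.sum_congr rfl fun k _ => (Finset.mul_sum _ _ _).symm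
    _ ≤ ∑ i, ∑ k, A i k * ∑ k', ∑ j, B k' j := by
        refine Finset.sum_le_sum fun i _ => Finset.sum_le_sum fun k _ => ?_
        exact mul_le_mul_of_nonneg_left (hrow k) (hA i k)
    _ = G.mnorm A * G.mnorm B := by
        rw [mnorm, Finset.sum_mul]
        exact Finset.sum_congr rfl fun i _ => (Finset.sum_mul _ _ _).symm

lemma Tp_block (l : List G.E) : l ≠ [] → ∀ i j, G.Tp l i j ≠ 0 →
    (∀ e, l.head? = some e → i.1 = G.src e) ∧
    (∀ e, l.getLast? = some e → j.1 = G.tgt e) := by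
  induction l with
  | nil => intro h; exact absurd rfl h
  | cons e l ih =>
    intro _ i j h
    rw [Tp_cons, Matrix.mul_apply] at h
    obtain ⟨k, _, hk⟩ := Finset.exists_ne_zero_of_sum_ne_zero h
    obtain ⟨h1, h2⟩ := mul_ne_zero_iff.mp hk
    constructor
    · intro e' he'
      cases Option.some_inj.mp he'
      exact (G.T_block e i k h1).1
    · intro e' he'
      cases l with
      | nil =>
        have hkj : k = j := by
          by_contra hne
          rw [Tp_nil, Matrix.one_apply_ne hne] at h2
          exact h2 rfl
        subst hkj
        have he'' : e = e' := by simpa using he'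
        subst he''
        exact (G.T_block e i k h1).2
      | cons e'' l'' =>
        rw [List.getLast?_cons_cons] at he'
        exact (ih (List.cons_ne_nil _ _) k j h2).2 e' he'

lemma pathFrom_glue {η φ : List G.E} {v₁ v₂ : G.V} (hη : G.IsPath η) (hηne : η ≠ [])
    (hs : G.startsAt η v₁) (he : G.endsAt η v₂) (hφ : G.PathFrom φ v₂ v₁) :
    G.PathFrom (η ++ φ) v₁ v₁ := by
  obtain ⟨hφp, ⟨ef, hef, hsf⟩, ⟨el, hel, htl⟩⟩ := hφ
  have hφne : φ ≠ [] := by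
    intro h0; rw [h0] at hef; simp at hef
  obtain ⟨e1, he1, hs1⟩ := hs
  obtain ⟨e2, he2, ht2⟩ := he
  refine ⟨?_, ?_, ?_⟩
  · rw [IsPath]; refine List.isChain_append.mpr ?_
    refine ⟨hη, hφp, fun x hx y hy => ?_⟩
    have hx' : x = e2 := by rw [he2] at hx; exact (Option.mem_some_iff.mp hx).symm
    have hy' : y = ef := by rw [hef] at hy; exact (Option.mem_some_iff.mp hy).symm
    rw [hx', hy', ht2, hsf]
  · exact ⟨e1, by rw [List.head?_append_of_ne_nil η hηne]; exact he1, hs1⟩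
  · exact ⟨el, by rw [List.getLast?_append_of_ne_nil η hφne]; exact hel, htl⟩

end GMPS

/-- **Closing lemma.** In an irreducible matrix product system with
irreducibility family `H`, there are constants `A, B > 0` such that any path `η`
can be closed up into a cycle `ηφ` with `φ ∈ H` and
`A ‖T(η)‖ ≤ spr T(ηφ) ≤ B ‖T(η)‖`. -/
theorem gmps_cycle_spectral_radius_estimate (G : GMPS) (hsc : G.StronglyConnected)
    (H : Finset (List G.E)) (hH : G.IrredFamily H) :
    ∃ A B : ℝ, 0 < A ∧ 0 < B ∧
      ∀ η : List G.E, G.IsPath η → η ≠ [] →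
        ∃ φ ∈ H, (∃ v : G.V, G.PathFrom (η ++ φ) v v) ∧
          A * G.mnorm (G.Tp η) ≤ G.spr (G.Tp (η ++ φ)) ∧
          G.spr (G.Tp (η ++ φ)) ≤ B * G.mnorm (G.Tp η) := by
  classical
  set N : ℝ := (Fintype.card G.Idx : ℝ) with hN
  have hN0 : 0 ≤ N := Nat.cast_nonneg _
  set Sset : Finset ℝ := ((H ×ˢ (Finset.univ : Finset (G.Idx × G.Idx))).filter
      fun x => 0 < G.Tp x.1 x.2.1 x.2.2).image fun x => G.Tp x.1 x.2.1 x.2.2 with hSset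
  have hδex : ∃ δ : ℝ, 0 < δ ∧ ∀ φ ∈ H, ∀ p q : G.Idx, 0 < G.Tp φ p q → δ ≤ G.Tp φ p q := by
    by_cases hS : Sset.Nonempty
    · refine ⟨Sset.min' hS, ?_, ?_⟩
      · have hmem := Sset.min'_mem hS
        obtain ⟨x, hx1, hx2⟩ := Finset.mem_image.mp hmem
        rw [← hx2]
        exact (Finset.mem_filter.mp hx1).2
      · intro φ hφ p q hpq
        refine Finset.min'_le _ _ ?_
        exact Finset.mem_image.mpr ⟨(φ, (p, q)),
          Finset.mem_filter.mpr ⟨Finset.mem_product.mpr ⟨hφ, Finset.mem_univ _⟩, hpq⟩, rfl⟩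
    · refine ⟨1, one_pos, fun φ hφ p q hpq => absurd ?_ hS⟩
      exact ⟨_, Finset.mem_image.mpr ⟨(φ, (p, q)),
        Finset.mem_filter.mpr ⟨Finset.mem_product.mpr ⟨hφ, Finset.mem_univ _⟩, hpq⟩, rfl⟩⟩
  obtain ⟨δ, hδ0, hδle⟩ := hδex
  set B : ℝ := (∑ φ ∈ H, G.mnorm (G.Tp φ)) + 1 with hB
  have hB0 : 0 < B := by
    have h0 : 0 ≤ ∑ φ ∈ H, G.mnorm (G.Tp φ) :=
      Finset.sum_nonneg fun φ _ => G.mnorm_nonneg (G.Tp_nonneg φ)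
    linarith
  have hBle : ∀ φ ∈ H, G.mnorm (G.Tp φ) ≤ B := by
    intro φ hφ
    have h0 := Finset.single_le_sum (f := fun ψ => G.mnorm (G.Tp ψ))
      (fun ψ _ => G.mnorm_nonneg (G.Tp_nonneg ψ)) hφ
    linarith
  refine ⟨δ / (N ^ 2 + 1), B, by positivity, hB0, ?_⟩
  intro η hηp hηne
  obtain ⟨e1, he1⟩ : ∃ e, η.head? = some e := ⟨η.head hηne, List.head?_eq_head hηne⟩
  obtain ⟨e2, he2⟩ : ∃ e, η.getLast? = some e :=
    ⟨η.getLast hηne, List.getLast?_eq_getLast_of_ne_nil hηne⟩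
  have hupper : ∀ φ ∈ H, G.spr (G.Tp (η ++ φ)) ≤ B * G.mnorm (G.Tp η) := by
    intro φ hφ
    have h1 : G.spr (G.Tp (η ++ φ)) ≤ G.mnorm (G.Tp (η ++ φ)) :=
      spr_upper _ (G.Tp_nonneg _)
    have h2 : G.mnorm (G.Tp (η ++ φ)) ≤ G.mnorm (G.Tp η) * G.mnorm (G.Tp φ) := by
      rw [G.Tp_append]
      exact G.mnorm_mul_le _ _ (G.Tp_nonneg η) (G.Tp_nonneg φ)
    have h3 : G.mnorm (G.Tp η) * G.mnorm (G.Tp φ) ≤ G.mnorm (G.Tp η) * B :=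
      mul_le_mul_of_nonneg_left (hBle φ hφ) (G.mnorm_nonneg (G.Tp_nonneg η))
    rw [mul_comm]
    linarith
  rcases eq_or_lt_of_le (G.mnorm_nonneg (G.Tp_nonneg η)) with hz | hz
  · obtain ⟨φ, hφH, hφpath, -⟩ := hH (G.tgt e2) (G.src e1)
      ⟨0, G.dim_pos _⟩ ⟨0, G.dim_pos _⟩
    refine ⟨φ, hφH, ⟨G.src e1,
      G.pathFrom_glue hηp hηne ⟨e1, he1, rfl⟩ ⟨e2, he2, rfl⟩ hφpath⟩, ?_, hupper φ hφH⟩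
    rw [← hz, mul_zero]
    exact ENNReal.toReal_nonneg
  · have hne : Nonempty G.Idx := by
      by_contra hno
      rw [not_nonempty_iff] at hno
      simp [GMPS.mnorm, Finset.univ_eq_empty] at hz
    obtain ⟨p₀, -, hmax⟩ := Finset.exists_max_image (Finset.univ : Finset (G.Idx × G.Idx))
      (fun p => G.Tp η p.1 p.2) Finset.univ_nonempty
    set i₀ := p₀.1 with hi₀
    set j₀ := p₀.2 with hj₀
    have hmax' : ∀ i j, G.Tp η i j ≤ G.Tp η i₀ j₀ := fun i j =>
      hmax (i, j) (Finset.mem_univ _)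
    have hmn : G.mnorm (G.Tp η) ≤ N ^ 2 * G.Tp η i₀ j₀ := by
      calc G.mnorm (G.Tp η) ≤ ∑ _i : G.Idx, ∑ _j : G.Idx, G.Tp η i₀ j₀ :=
          Finset.sum_le_sum fun i _ => Finset.sum_le_sum fun j _ => hmax' i j
        _ = N ^ 2 * G.Tp η i₀ j₀ := by
          simp [Finset.sum_const, nsmul_eq_mul, hN]
          ring
    have hval : 0 < G.Tp η i₀ j₀ := by
      by_contra hc
      push_neg at hc
      nlinarith
    obtain ⟨hib, hjb⟩ := G.Tp_block η hηne i₀ j₀ (ne_of_gt hval)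
    have hi1 : i₀.1 = G.src e1 := hib e1 he1
    have hj1 : j₀.1 = G.tgt e2 := hjb e2 he2
    obtain ⟨φ, hφH, hφpath, hφpos⟩ := hH j₀.1 i₀.1 j₀.2 i₀.2
    have hφpos' : 0 < G.Tp φ j₀ i₀ := by simpa using hφpos
    have hδφ : δ ≤ G.Tp φ j₀ i₀ := hδle φ hφH j₀ i₀ hφpos'
    have hφpath' : G.PathFrom φ (G.tgt e2) (G.src e1) := by rwa [hi1, hj1] at hφpath
    have hdiag : G.Tp η i₀ j₀ * G.Tp φ j₀ i₀ ≤ G.Tp (η ++ φ) i₀ i₀ := by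
      rw [G.Tp_append, Matrix.mul_apply]
      exact Finset.single_le_sum (f := fun k => G.Tp η i₀ k * G.Tp φ k i₀)
        (fun k _ => mul_nonneg (G.Tp_nonneg η i₀ k) (G.Tp_nonneg φ k i₀)) (Finset.mem_univ j₀)
    have hlow : G.Tp (η ++ φ) i₀ i₀ ≤ G.spr (G.Tp (η ++ φ)) :=
      spr_lower _ (G.Tp_nonneg _) i₀
    refine ⟨φ, hφH, ⟨G.src e1,
      G.pathFrom_glue hηp hηne ⟨e1, he1, rfl⟩ ⟨e2, he2, rfl⟩ hφpath'⟩, ?_, hupper φ hφH⟩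
    have hcp : 0 ≤ δ / (N ^ 2 + 1) := by positivity
    have hc : δ / (N ^ 2 + 1) * (N ^ 2 + 1) = δ := div_mul_cancel₀ _ (by positivity)
    have h1 : δ / (N ^ 2 + 1) * G.mnorm (G.Tp η)
        ≤ δ / (N ^ 2 + 1) * (N ^ 2 * G.Tp η i₀ j₀) :=
      mul_le_mul_of_nonneg_left hmn hcp
    have h2 : δ / (N ^ 2 + 1) * (N ^ 2 * G.Tp η i₀ j₀) ≤ δ * G.Tp η i₀ j₀ := by
      nlinarith [mul_nonneg hcp hval.le]
    have h3 : δ * G.Tp η i₀ j₀ ≤ G.Tp φ j₀ i₀ * G.Tp η i₀ j₀ :=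
      mul_le_mul_of_nonneg_right hδφ hval.le
    have h4 : G.Tp φ j₀ i₀ * G.Tp η i₀ j₀ = G.Tp η i₀ j₀ * G.Tp φ j₀ i₀ := mul_comm _ _
    linarith
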